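/- arXiv:1607.01797 — 2 statements merged into one kernel-verified Lean document; each statement's English description precedes it below -/
import Mathlib

section
/- Let h denote the binary entropy function h(q) = −q·log₂(q) − (1−q)·log₂(1−q) (with h(0)=h(1)=0), and define G : [3/4, (2+√2)/4] → ℝ by G(x) = 1 − h(1/2 + (1/2)·√(16x² − 16x + 3)). Then the derivative of G is strictly increasing on the open interval (3/4, (2+√2)/4); equivalently, G is strictly convex on [3/4, (2+√2)/4]. -/
/-- The binary entropy function `h(q) = −q·log₂ q − (1−q)·log₂(1−q)`
(with the conventions `h 0 = h 1 = 0`, which hold automatically since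
`Real.logb 2 0 = 0`). -/
noncomputable def binaryEntropy (q : ℝ) : ℝ :=
  -q * Real.logb 2 q - (1 - q) * Real.logb 2 (1 - q)

/-- The single-round entropy bound of the CHSH-based protocol, as a function of
the CHSH winning probability `x ∈ [3/4, (2+√2)/4]`. -/
noncomputable def chshEntropyBound (x : ℝ) : ℝ :=
  1 - binaryEntropy (1 / 2 + (1 / 2) * Real.sqrt (16 * x ^ 2 - 16 * x + 3))

open Real Set

-- key inequality: log(1+z) - log(1-z) < 2z/(1-z^2) on (0,1)
lemma keyIneq {z : ℝ} (hz : z ∈ Set.Ioo (0:ℝ) 1) :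
    Real.log (1+z) - Real.log (1-z) < 2*z/(1-z^2) := by
  set ψ : ℝ → ℝ := fun t => 2*t/(1-t^2) - (Real.log (1+t) - Real.log (1-t)) with hψ
  have hψd : ∀ t ∈ Set.Ico (0:ℝ) 1,
      HasDerivAt ψ ((2*(1-t^2) - 2*t*(-(2*t)))/(1-t^2)^2 - (1/(1+t) - -1/(1-t))) t := by
    intro t ht
    have h0 : 0 < 1 - t := by linarith [ht.2]
    have h1 : 0 < 1 + t := by linarith [ht.1]
    have hne : (1 - t^2) ≠ 0 := by nlinarith
    have hd1 : HasDerivAt (fun t : ℝ => 1 - t^2) (-(2*t)) t := by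
      simpa using (HasDerivAt.const_sub 1 (hasDerivAt_pow 2 t))
    have hd2 : HasDerivAt (fun t : ℝ => 2*t) 2 t := by
      simpa using (hasDerivAt_id t).const_mul (2:ℝ)
    have hd3 : HasDerivAt (fun t : ℝ => 2*t/(1-t^2))
        ((2*(1-t^2) - 2*t*(-(2*t)))/(1-t^2)^2) t := hd2.div hd1 hne
    have hd4 : HasDerivAt (fun t : ℝ => Real.log (1+t)) (1/(1+t)) t := by
      simpa using (((hasDerivAt_id t).const_add 1).log h1.ne')
    have hd5 : HasDerivAt (fun t : ℝ => Real.log (1-t)) (-1/(1-t)) t := by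
      simpa using ((HasDerivAt.const_sub 1 (hasDerivAt_id t)).log h0.ne')
    exact hd3.sub (hd4.sub hd5)
  have hmono : StrictMonoOn ψ (Set.Ico (0:ℝ) 1) := by
    apply strictMonoOn_of_deriv_pos (convex_Ico 0 1)
    · exact fun t ht => (hψd t ht).continuousAt.continuousWithinAt
    · rw [interior_Ico]
      intro t ht
      rw [(hψd t (Set.mem_Ico.2 ⟨ht.1.le, ht.2⟩)).deriv]
      have h0 : 0 < 1 - t := by linarith [ht.2]
      have h1 : 0 < 1 + t := by linarith [ht.1]
      have hne : (0:ℝ) < 1 - t^2 := by nlinarith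
      have heq : (2*(1-t^2) - 2*t*(-(2*t)))/(1-t^2)^2 - (1/(1+t) - -1/(1-t))
          = 4*t^2/(1-t^2)^2 := by field_simp; ring
      rw [heq]
      exact div_pos (by nlinarith [ht.1]) (by positivity)
  have h0mem : (0:ℝ) ∈ Set.Ico (0:ℝ) 1 := by norm_num
  have hzmem : z ∈ Set.Ico (0:ℝ) 1 := ⟨hz.1.le, hz.2⟩
  have := hmono h0mem hzmem hz.1
  have hψ0 : ψ 0 = 0 := by simp [hψ]
  rw [hψ0] at this
  simp only [hψ] at this
  linarith

noncomputable def gAux (z : ℝ) : ℝ :=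
  Real.sqrt (1+z^2) * (Real.log (1+z) - Real.log (1-z)) / z

lemma gAux_strictMono : StrictMonoOn gAux (Set.Ioo (0:ℝ) 1) := by
  apply strictMonoOn_of_deriv_pos (convex_Ioo 0 1)
  case hf' =>
    rw [interior_Ioo]
    intro z hz
    have h0 : 0 < 1 - z := by linarith [hz.2]
    have h1 : 0 < 1 + z := by linarith [hz.1]
    have hzpos : 0 < z := hz.1
    have hspos : 0 < Real.sqrt (1+z^2) := Real.sqrt_pos.2 (by positivity)
    have hs2 : Real.sqrt (1+z^2) ^ 2 = 1 + z^2 := Real.sq_sqrt (by positivity)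
    have hs1 : 1 ≤ Real.sqrt (1+z^2) := by nlinarith [hs2, Real.sqrt_nonneg (1+z^2)]
    have hA : HasDerivAt (fun z : ℝ => Real.sqrt (1+z^2))
        (2*z/(2*Real.sqrt (1+z^2))) z := by
      have := (((hasDerivAt_pow 2 z).const_add 1).sqrt (by positivity : 1+z^2 ≠ 0))
      convert this using 1
      push_cast; ring
    have hL : HasDerivAt (fun z : ℝ => Real.log (1+z) - Real.log (1-z))
        (1/(1+z) - -1/(1-z)) z := by
      have hd4 : HasDerivAt (fun t : ℝ => Real.log (1+t)) (1/(1+z)) z := by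
        simpa using (((hasDerivAt_id z).const_add 1).log h1.ne')
      have hd5 : HasDerivAt (fun t : ℝ => Real.log (1-t)) (-1/(1-z)) z := by
        simpa using ((HasDerivAt.const_sub 1 (hasDerivAt_id z)).log h0.ne')
      exact hd4.sub hd5
    have hg : HasDerivAt gAux
        (((2*z/(2*Real.sqrt (1+z^2)) * (Real.log (1+z) - Real.log (1-z))
          + Real.sqrt (1+z^2) * (1/(1+z) - -1/(1-z))) * z
          - Real.sqrt (1+z^2) * (Real.log (1+z) - Real.log (1-z)) * 1) / z^2) z :=
      (hA.mul hL).div (hasDerivAt_id z) hzpos.ne'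
    rw [hg.deriv]
    set s := Real.sqrt (1+z^2)
    set L := Real.log (1+z) - Real.log (1-z) with hLdef
    apply div_pos _ (by positivity)
    have h1z2 : (0:ℝ) < 1 - z^2 := by nlinarith
    have e1 : 1/(1+z) - -1/(1-z) = 2/(1-z^2) := by
      field_simp
      ring
    have e2 : 2*z/(2*s) = z/s := mul_div_mul_left z s two_ne_zero
    have e4 : z/s*L*z - s*L = -(L/s) := by
      field_simp
      linear_combination (-L) * hs2
    have hNeq : (2*z/(2*s) * L + s * (1/(1+z) - -1/(1-z))) * z - s * L * 1
        = 2*s*z/(1-z^2) - L/s := by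
      rw [e2, e1]
      calc (z/s*L + s*(2/(1-z^2)))*z - s*L*1
          = (z/s*L*z - s*L) + 2*s*z/(1-z^2) := by ring
        _ = 2*s*z/(1-z^2) - L/s := by rw [e4]; ring
    rw [hNeq]
    have hkey : L < 2*z/(1-z^2) := keyIneq hz
    have hL1 : L/s < (2*z/(1-z^2))/s := by gcongr
    have hL2 : (2*z/(1-z^2))/s ≤ 2*s*z/(1-z^2) := by
      rw [div_div, div_le_div_iff₀ (by positivity) h1z2]
      have key : 2*s*z*((1-z^2)*s) - 2*z*(1-z^2) = 2*z*(1-z^2)*z^2 := by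
        linear_combination (2*z*(1-z^2)) * hs2
      nlinarith [key, mul_nonneg (mul_nonneg (by linarith : (0:ℝ) ≤ 2*z) h1z2.le) (sq_nonneg z)]
    linarith
  case hf =>
    intro z hz
    have h0 : (0:ℝ) < 1 - z := by linarith [hz.2]
    have h1 : (0:ℝ) < 1 + z := by linarith [hz.1]
    have : ContinuousAt gAux z := by
      apply ContinuousAt.div _ continuousAt_id hz.1.ne'
      apply ContinuousAt.mul
      · exact (Real.continuous_sqrt.comp (continuous_const.add (continuous_pow 2))).continuousAt
      · exact ContinuousAt.sub
          ((Real.continuousAt_log h1.ne').comp ((continuous_const.add continuous_id).continuousAt))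
          ((Real.continuousAt_log h0.ne').comp ((continuous_const.sub continuous_id).continuousAt))
    exact this.continuousWithinAt

lemma chsh_eq : chshEntropyBound = fun x =>
    1 - Real.binEntropy (1 / 2 + (1 / 2) * Real.sqrt (16 * x ^ 2 - 16 * x + 3)) / Real.log 2 := by
  funext x
  simp only [chshEntropyBound, binaryEntropy, Real.binEntropy, Real.logb, Real.log_inv]
  ring

lemma u_pos {x : ℝ} (hx : x ∈ Set.Ioo (3/4 : ℝ) ((2 + Real.sqrt 2)/4)) :
    0 < 16 * x ^ 2 - 16 * x + 3 := by
  have h1 : 3/4 < x := hx.1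
  nlinarith [mul_pos (show (0:ℝ) < 4*x-3 by linarith) (show (0:ℝ) < 4*x-1 by linarith)]

lemma u_lt_one {x : ℝ} (hx : x ∈ Set.Ioo (3/4 : ℝ) ((2 + Real.sqrt 2)/4)) :
    16 * x ^ 2 - 16 * x + 3 < 1 := by
  have h2 : 4 * x < 2 + Real.sqrt 2 := by
    have := hx.2; linarith
  have h1 : (0:ℝ) < 4 * x - 2 := by
    have := hx.1; linarith
  nlinarith [Real.sq_sqrt (show (0:ℝ) ≤ 2 by norm_num), Real.sqrt_nonneg 2]

lemma Z_mem {x : ℝ} (hx : x ∈ Set.Ioo (3/4 : ℝ) ((2 + Real.sqrt 2)/4)) :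
    Real.sqrt (16 * x ^ 2 - 16 * x + 3) ∈ Set.Ioo (0:ℝ) 1 := by
  constructor
  · exact Real.sqrt_pos.2 (u_pos hx)
  · have := Real.sqrt_lt_sqrt (u_pos hx).le (u_lt_one hx)
    rwa [Real.sqrt_one] at this

lemma chsh_hasDerivAt {x : ℝ} (hx : x ∈ Set.Ioo (3/4 : ℝ) ((2 + Real.sqrt 2)/4)) :
    deriv chshEntropyBound x
      = (2 / Real.log 2) * gAux (Real.sqrt (16 * x ^ 2 - 16 * x + 3)) := by
  set z := Real.sqrt (16 * x ^ 2 - 16 * x + 3) with hzdef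
  have hzmem : z ∈ Set.Ioo (0:ℝ) 1 := Z_mem hx
  have hupos := u_pos hx
  have hu : HasDerivAt (fun y : ℝ => 16 * y ^ 2 - 16 * y + 3) (32 * x - 16) x := by
    have h := (((hasDerivAt_pow 2 x).const_mul (16:ℝ)).fun_sub
      ((hasDerivAt_id' x).const_mul (16:ℝ))).add_const (3:ℝ)
    refine h.congr_deriv ?_
    norm_num
    ring
  have hz : HasDerivAt (fun y : ℝ => Real.sqrt (16 * y ^ 2 - 16 * y + 3))
      ((32 * x - 16) / (2 * z)) x := hu.sqrt hupos.ne'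
  have hp : HasDerivAt (fun y : ℝ => 1/2 + (1/2) * Real.sqrt (16 * y ^ 2 - 16 * y + 3))
      ((1/2) * ((32 * x - 16) / (2 * z))) x := (hz.const_mul (1/2 : ℝ)).const_add (1/2 : ℝ)
  set p := 1/2 + (1/2) * z with hpdef
  have hp0 : p ≠ 0 := by simp only [hpdef]; nlinarith [hzmem.1]
  have hp1 : p ≠ 1 := by simp only [hpdef]; nlinarith [hzmem.2]
  have hb : HasDerivAt Real.binEntropy (Real.log (1 - p) - Real.log p) p :=
    Real.hasDerivAt_binEntropy hp0 hp1
  have hbp := hb.comp x hp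
  have hG : HasDerivAt chshEntropyBound
      (-((Real.log (1 - p) - Real.log p) * ((1/2) * ((32 * x - 16) / (2 * z))) / Real.log 2)) x := by
    rw [chsh_eq]
    exact HasDerivAt.const_sub 1 (hbp.div_const (Real.log 2))
  rw [hG.deriv]
  have hlog2 : Real.log 2 ≠ 0 := (Real.log_pos one_lt_two).ne'
  have hz0 : (0:ℝ) < z := hzmem.1
  have hz1 : z < 1 := hzmem.2
  have hlp : Real.log p = Real.log (1 + z) - Real.log 2 := by
    have : p = (1 + z) / 2 := by rw [hpdef]; ring
    rw [this, Real.log_div (by linarith) two_ne_zero]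
  have hl1p : Real.log (1 - p) = Real.log (1 - z) - Real.log 2 := by
    have : 1 - p = (1 - z) / 2 := by rw [hpdef]; ring
    rw [this, Real.log_div (by linarith) two_ne_zero]
  have hz2 : z ^ 2 = 16 * x ^ 2 - 16 * x + 3 := Real.sq_sqrt hupos.le
  have hs : Real.sqrt (1 + z ^ 2) = 4 * x - 2 := by
    have h42 : (0:ℝ) ≤ 4 * x - 2 := by have := hx.1; linarith
    have : 1 + z ^ 2 = (4 * x - 2) ^ 2 := by rw [hz2]; ring
    rw [this, Real.sqrt_sq h42]
  rw [hlp, hl1p]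
  unfold gAux
  rw [hs]
  field_simp
  ring

/-- The derivative of `G(x) = 1 − h(1/2 + (1/2)√(16x² − 16x + 3))` is strictly
increasing on the open interval `(3/4, (2+√2)/4)`; equivalently, `G` is strictly
convex on `[3/4, (2+√2)/4]`. -/
theorem chshEntropyBound_deriv_strictMono_and_strictConvex :
    StrictMonoOn (deriv chshEntropyBound)
      (Set.Ioo (3 / 4 : ℝ) ((2 + Real.sqrt 2) / 4)) ∧
    StrictConvexOn ℝ (Set.Icc (3 / 4 : ℝ) ((2 + Real.sqrt 2) / 4))
      chshEntropyBound := by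
  have hmono : StrictMonoOn (deriv chshEntropyBound)
      (Set.Ioo (3 / 4 : ℝ) ((2 + Real.sqrt 2) / 4)) := by
    intro x hx y hy hxy
    rw [chsh_hasDerivAt hx, chsh_hasDerivAt hy]
    have hc : (0:ℝ) < 2 / Real.log 2 := by
      have := Real.log_pos one_lt_two; positivity
    apply mul_lt_mul_of_pos_left _ hc
    apply gAux_strictMono (Z_mem hx) (Z_mem hy)
    apply Real.sqrt_lt_sqrt (u_pos hx).le
    nlinarith [hx.1, hy.1]
  refine ⟨hmono, ?_⟩
  apply StrictMonoOn.strictConvexOn_of_deriv (convex_Icc _ _)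
  · rw [chsh_eq]
    apply Continuous.continuousOn
    apply continuous_const.sub
    apply Continuous.div_const
    apply Real.binEntropy_continuous.comp
    exact continuous_const.add (continuous_const.mul
      (Real.continuous_sqrt.comp (by continuity)))
  · rw [interior_Icc]
    exact hmono
end

section
/- Let h denote the binary entropy function h(q) = −q·log₂(q) − (1−q)·log₂(1−q) (with h(0)=h(1)=0), and define G : [3/4, (2+√2)/4] → ℝ by G(x) = 1 − h(1/2 + (1/2)·√(16x² − 16x + 3)). Let γ ∈ (0,1], let s be a positive integer, and let ω₁,…,ω_s ∈ [3/4, (2+√2)/4]. Set c = ∑_{i=1}^{s} γ(1−γ)^{i−1} ωᵢ and ω* = c / (1 − (1−γ)^{s}). Then ω* ∈ [3/4, (2+√2)/4] and ∑_{i=1}^{s} (1−γ)^{i−1} G(ωᵢ) ≥ (∑_{i=1}^{s} (1−γ)^{i−1}) · G(ω*). In particular, the minimum of ∑_{i=1}^{s} (1−γ)^{i−1} G(ωᵢ) over all ω₁,…,ω_s ∈ [3/4, (2+√2)/4] satisfying the constraint ∑_{i=1}^{s} γ(1−γ)^{i−1} ωᵢ = c is attained when ωᵢ = ω* for all i. 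-/
open Real Set

/-- key inequality: `log (1+t) - log (1-t) ≤ 2t/(1-t^2)` on `[0,1)`. -/
lemma key_log_ineq : ∀ t : ℝ, 0 ≤ t → t < 1 →
    Real.log (1 + t) - Real.log (1 - t) ≤ 2 * t / (1 - t ^ 2) := by
  have hF : ∀ t : ℝ, -1 < t → t < 1 →
      HasDerivAt (fun t : ℝ => 2 * t / (1 - t ^ 2) - (Real.log (1 + t) - Real.log (1 - t)))
        (4 * t ^ 2 / (1 - t ^ 2) ^ 2) t := by
    intro t ht0 ht1
    have h1 : (1 : ℝ) + t ≠ 0 := by nlinarith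
    have h2 : (1 : ℝ) - t ≠ 0 := by nlinarith
    have h3 : (1 : ℝ) - t ^ 2 ≠ 0 := by nlinarith
    have hA : HasDerivAt (fun t : ℝ => 2 * t / (1 - t ^ 2))
        ((2 * (1 - t ^ 2) - 2 * t * (0 - 2 * t)) / (1 - t ^ 2) ^ 2) t := by
      have := (((hasDerivAt_id t).const_mul 2).div ((hasDerivAt_pow 2 t).const_sub 1) h3)
      simp only [id] at this
      refine this.congr_deriv ?_
      push_cast
      ring
    have hB : HasDerivAt (fun t : ℝ => Real.log (1 + t)) (1 / (1 + t)) t := by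
      simpa using (((hasDerivAt_id t).const_add 1).log h1)
    have hC : HasDerivAt (fun t : ℝ => Real.log (1 - t)) (-1 / (1 - t)) t := by
      simpa using (((hasDerivAt_id t).const_sub 1).log h2)
    have := hA.sub (hB.sub hC)
    refine this.congr_deriv ?_
    field_simp
    ring
  intro t ht0 ht1
  have hmono : MonotoneOn
      (fun t : ℝ => 2 * t / (1 - t ^ 2) - (Real.log (1 + t) - Real.log (1 - t)))
      (Ico (0:ℝ) 1) := by
    apply monotoneOn_of_deriv_nonneg (convex_Ico 0 1)
    · intro x hx
      exact (hF x (by linarith [hx.1]) hx.2).continuousAt.continuousWithinAt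
    · rw [interior_Ico]
      intro x hx
      exact (hF x (by linarith [hx.1]) hx.2).differentiableAt.differentiableWithinAt
    · rw [interior_Ico]
      intro x hx
      rw [(hF x (by linarith [hx.1]) hx.2).deriv]
      positivity
  have h0 := hmono (show (0:ℝ) ∈ Ico (0:ℝ) 1 by constructor <;> norm_num)
    (show t ∈ Ico (0:ℝ) 1 from ⟨ht0, ht1⟩) ht0
  simp at h0
  linarith

/-- `g t = (log(1+t) - log(1-t))/t` is monotone on `(0,1)`. -/
lemma g_mono : MonotoneOn
    (fun t : ℝ => (Real.log (1 + t) - Real.log (1 - t)) / t) (Ioo (0:ℝ) 1) := by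
  have hg : ∀ t : ℝ, 0 < t → t < 1 →
      HasDerivAt (fun t : ℝ => (Real.log (1 + t) - Real.log (1 - t)) / t)
        (((1 / (1 + t) - -1 / (1 - t)) * t - (Real.log (1 + t) - Real.log (1 - t)) * 1) / t ^ 2)
        t := by
    intro t ht0 ht1
    have h1 : (1 : ℝ) + t ≠ 0 := by nlinarith
    have h2 : (1 : ℝ) - t ≠ 0 := by nlinarith
    have hB : HasDerivAt (fun t : ℝ => Real.log (1 + t)) (1 / (1 + t)) t := by
      simpa using (((hasDerivAt_id t).const_add 1).log h1)
    have hC : HasDerivAt (fun t : ℝ => Real.log (1 - t)) (-1 / (1 - t)) t := by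
      simpa using (((hasDerivAt_id t).const_sub 1).log h2)
    exact (hB.sub hC).div (hasDerivAt_id t) (ne_of_gt ht0)
  apply monotoneOn_of_deriv_nonneg (convex_Ioo 0 1)
  · intro x hx
    exact (hg x hx.1 hx.2).continuousAt.continuousWithinAt
  · rw [interior_Ioo]
    intro x hx
    exact (hg x hx.1 hx.2).differentiableAt.differentiableWithinAt
  · rw [interior_Ioo]
    intro x hx
    obtain ⟨hx0, hx1⟩ := hx
    rw [(hg x hx0 hx1).deriv]
    have h1 : (0 : ℝ) < 1 + x := by linarith
    have h2 : (0 : ℝ) < 1 - x := by linarith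
    have hkey := key_log_ineq x hx0.le hx1
    have h3 : (1:ℝ) - x ^ 2 ≠ 0 := by nlinarith
    have heq : (1 / (1 + x) - -1 / (1 - x)) * x = 2 * x / (1 - x ^ 2) := by
      field_simp
      ring
    rw [heq]
    have : (Real.log (1 + x) - Real.log (1 - x)) * 1 ≤ 2 * x / (1 - x ^ 2) := by
      rw [mul_one]; exact hkey
    have hnum : 0 ≤ 2 * x / (1 - x ^ 2) - (Real.log (1 + x) - Real.log (1 - x)) * 1 := by
      linarith
    positivity

noncomputable def Gaux (x : ℝ) : ℝ :=
  1 - Real.binEntropy (1 / 2 + (1 / 2) * Real.sqrt (16 * x ^ 2 - 16 * x + 3)) / Real.log 2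

lemma P_mem {x : ℝ} (hx : x ∈ Ioo (3/4 : ℝ) ((2 + Real.sqrt 2)/4)) :
    0 < 16 * x ^ 2 - 16 * x + 3 ∧ 16 * x ^ 2 - 16 * x + 3 < 1 := by
  obtain ⟨h1, h2⟩ := hx
  have hs2 : Real.sqrt 2 ^ 2 = 2 := Real.sq_sqrt (by norm_num)
  have hs2' : (0:ℝ) ≤ Real.sqrt 2 := Real.sqrt_nonneg 2
  constructor
  · nlinarith
  · nlinarith [sq_nonneg (4*x - 2 - Real.sqrt 2)]

noncomputable def Dfun (x : ℝ) : ℝ :=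
  (8 * x - 4) *
    ((Real.log (1 + Real.sqrt (16 * x ^ 2 - 16 * x + 3)) -
      Real.log (1 - Real.sqrt (16 * x ^ 2 - 16 * x + 3))) /
        Real.sqrt (16 * x ^ 2 - 16 * x + 3)) / Real.log 2

lemma hasDerivAt_Gaux {x : ℝ} (hx : x ∈ Ioo (3/4 : ℝ) ((2 + Real.sqrt 2)/4)) :
    HasDerivAt Gaux (Dfun x) x := by
  obtain ⟨hp0, hp1⟩ := P_mem hx
  set p := 16 * x ^ 2 - 16 * x + 3 with hp
  set t := Real.sqrt p with htdef
  have ht0 : 0 < t := Real.sqrt_pos.2 hp0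
  have ht1 : t < 1 := by
    rw [htdef, show (1:ℝ) = Real.sqrt 1 by simp]
    exact Real.sqrt_lt_sqrt hp0.le (by simpa using hp1)
  have hP : HasDerivAt (fun x : ℝ => 16 * x ^ 2 - 16 * x + 3) (32 * x - 16) x := by
    have := (((hasDerivAt_pow 2 x).const_mul (16:ℝ)).sub
      ((hasDerivAt_id x).const_mul (16:ℝ))).add_const 3
    refine this.congr_deriv ?_
    simp [id]
    ring
  have hsq : HasDerivAt (fun x : ℝ => Real.sqrt (16 * x ^ 2 - 16 * x + 3))
      ((32 * x - 16) / (2 * t)) x := hP.sqrt (ne_of_gt hp0)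
  have hqd : HasDerivAt (fun x : ℝ => 1 / 2 + (1 / 2) * Real.sqrt (16 * x ^ 2 - 16 * x + 3))
      ((1 / 2) * ((32 * x - 16) / (2 * t))) x := (hsq.const_mul _).const_add _
  have hq0 : (1 / 2 : ℝ) + (1 / 2) * t ≠ 0 := by nlinarith
  have hq1 : (1 / 2 : ℝ) + (1 / 2) * t ≠ 1 := by nlinarith
  have hbe := Real.hasDerivAt_binEntropy hq0 hq1
  have hcomp := (hbe.comp x hqd).div_const (Real.log 2)
  have hfin := hcomp.const_sub 1
  have : Gaux = fun x : ℝ =>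
      1 - (Real.binEntropy ∘ fun x : ℝ =>
        1 / 2 + 1 / 2 * Real.sqrt (16 * x ^ 2 - 16 * x + 3)) x / Real.log 2 := rfl
  rw [this]
  refine hfin.congr_deriv ?_
  have hlog2 : Real.log 2 ≠ 0 := by
    have := Real.log_pos (by norm_num : (1:ℝ) < 2); linarith
  have e1 : (1:ℝ) - (1 / 2 + 1 / 2 * t) = (1 - t) / 2 := by ring
  have e2 : (1 / 2 : ℝ) + 1 / 2 * t = (1 + t) / 2 := by ring
  rw [e1, e2, Real.log_div (by nlinarith) (by norm_num),
    Real.log_div (by nlinarith) (by norm_num)]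
  unfold Dfun
  rw [← hp]
  field_simp
  ring

lemma Dfun_mono : MonotoneOn Dfun (Ioo (3/4 : ℝ) ((2 + Real.sqrt 2)/4)) := by
  intro x hx y hy hxy
  obtain ⟨hpx0, hpx1⟩ := P_mem hx
  obtain ⟨hpy0, hpy1⟩ := P_mem hy
  set tx := Real.sqrt (16 * x ^ 2 - 16 * x + 3) with htx
  set ty := Real.sqrt (16 * y ^ 2 - 16 * y + 3) with hty
  have htx0 : 0 < tx := Real.sqrt_pos.2 hpx0
  have hty0 : 0 < ty := Real.sqrt_pos.2 hpy0
  have htx1 : tx < 1 := by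
    rw [htx, show (1:ℝ) = Real.sqrt 1 by simp]
    exact Real.sqrt_lt_sqrt hpx0.le (by simpa using hpx1)
  have hty1 : ty < 1 := by
    rw [hty, show (1:ℝ) = Real.sqrt 1 by simp]
    exact Real.sqrt_lt_sqrt hpy0.le (by simpa using hpy1)
  have htxy : tx ≤ ty := by
    apply Real.sqrt_le_sqrt
    nlinarith [hx.1, hy.1]
  have hg := g_mono (show tx ∈ Ioo (0:ℝ) 1 from ⟨htx0, htx1⟩)
    (show ty ∈ Ioo (0:ℝ) 1 from ⟨hty0, hty1⟩) htxy
  have hgx_nonneg : 0 ≤ (Real.log (1 + tx) - Real.log (1 - tx)) / tx := by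
    apply div_nonneg _ htx0.le
    have h1 : 0 ≤ Real.log (1 + tx) := Real.log_nonneg (by linarith)
    have h2 : Real.log (1 - tx) ≤ 0 := Real.log_nonpos (by linarith) (by linarith)
    linarith
  have hA : 8 * x - 4 ≤ 8 * y - 4 := by linarith
  have hA0 : 0 ≤ 8 * x - 4 := by have := hx.1; linarith
  have hlog2 : 0 < Real.log 2 := Real.log_pos (by norm_num)
  unfold Dfun
  rw [div_le_div_iff_of_pos_right hlog2]
  exact mul_le_mul hA hg hgx_nonneg (by linarith)

lemma convexOn_Gaux :
    ConvexOn ℝ (Icc (3/4 : ℝ) ((2 + Real.sqrt 2)/4)) Gaux := by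
  apply MonotoneOn.convexOn_of_deriv (convex_Icc _ _)
  · have : Continuous Gaux := by
      unfold Gaux
      fun_prop
    exact this.continuousOn
  · rw [interior_Icc]
    intro x hx
    exact (hasDerivAt_Gaux hx).differentiableAt.differentiableWithinAt
  · rw [interior_Icc]
    intro x hx y hy hxy
    rw [(hasDerivAt_Gaux hx).deriv, (hasDerivAt_Gaux hy).deriv]
    exact Dfun_mono hx hy hxy

lemma chsh_eq_Gaux : chshEntropyBound = Gaux := by
  funext x
  unfold chshEntropyBound binaryEntropy Gaux Real.binEntropy Real.logb
  rw [Real.log_inv, Real.log_inv]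
  ring

/-- Appendix B lemma: with `ωᵢ ∈ [3/4, (2+√2)/4]` for `i = 1, …, s` (indexed
here by `i ∈ Fin s`, so that `(1−γ)^{i−1}` becomes `(1−γ)^i`),
`c = ∑ᵢ γ(1−γ)^{i−1} ωᵢ` and `ω* = c/(1−(1−γ)^s)`, we have
`ω* ∈ [3/4, (2+√2)/4]` and
`∑ᵢ (1−γ)^{i−1} G(ωᵢ) ≥ (∑ᵢ (1−γ)^{i−1}) · G(ω*)`; in particular the minimum
of the left-hand side under the constraint fixing `c` is attained when all
`ωᵢ = ω*`. -/
theorem block_entropy_min_at_uniform_winning_probability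
    (γ : ℝ) (hγ : γ ∈ Set.Ioc (0 : ℝ) 1) (s : ℕ) (hs : 0 < s)
    (ω : Fin s → ℝ)
    (hω : ∀ i, ω i ∈ Set.Icc (3 / 4 : ℝ) ((2 + Real.sqrt 2) / 4))
    (c : ℝ) (hc : c = ∑ i : Fin s, γ * (1 - γ) ^ (i : ℕ) * ω i)
    (ωstar : ℝ) (hstar : ωstar = c / (1 - (1 - γ) ^ s)) :
    ωstar ∈ Set.Icc (3 / 4 : ℝ) ((2 + Real.sqrt 2) / 4) ∧
    (∑ i : Fin s, (1 - γ) ^ (i : ℕ) * chshEntropyBound (ω i)) ≥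
      (∑ i : Fin s, (1 - γ) ^ (i : ℕ)) * chshEntropyBound ωstar := by
  obtain ⟨hγ0, hγ1⟩ := hγ
  have hr0 : (0:ℝ) ≤ 1 - γ := by linarith
  set w : Fin s → ℝ := fun i => (1 - γ) ^ (i : ℕ) with hwdef
  have hw0 : ∀ i, 0 ≤ w i := fun i => pow_nonneg hr0 _
  set W := ∑ i : Fin s, w i with hWdef
  have hWpos : 0 < W := by
    have h1 : w ⟨0, hs⟩ ≤ W :=
      Finset.single_le_sum (fun i _ => hw0 i) (Finset.mem_univ _)
    have h2 : w ⟨0, hs⟩ = 1 := by simp [hwdef]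
    linarith
  have hgeom : γ * W = 1 - (1 - γ) ^ s := by
    have hrange : W = ∑ i ∈ Finset.range s, (1 - γ) ^ i := by
      rw [hWdef]; exact Fin.sum_univ_eq_sum_range (fun i => (1 - γ) ^ i) s
    have hg := geom_sum_mul (1 - γ) s
    have : γ * W = -((∑ i ∈ Finset.range s, (1 - γ) ^ i) * (1 - γ - 1)) := by
      rw [hrange]; ring
    rw [this, hg]; ring
  have hden : 0 < 1 - (1 - γ) ^ s := by rw [← hgeom]; positivity
  have hc' : c = γ * ∑ i : Fin s, w i * ω i := by
    rw [hc, Finset.mul_sum]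
    exact Finset.sum_congr rfl fun i _ => by rw [hwdef]; ring
  have hstar' : ωstar = (∑ i : Fin s, w i * ω i) / W := by
    rw [hstar, hc', ← hgeom, mul_div_mul_left _ _ (ne_of_gt hγ0)]
  have hmem : ωstar ∈ Set.Icc (3 / 4 : ℝ) ((2 + Real.sqrt 2) / 4) := by
    constructor
    · rw [hstar', le_div_iff₀ hWpos, hWdef, Finset.mul_sum]
      apply Finset.sum_le_sum
      intro i _
      have h1 := (hω i).1
      have h2 := hw0 i
      nlinarith
    · rw [hstar', div_le_iff₀ hWpos, hWdef, Finset.mul_sum]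
      apply Finset.sum_le_sum
      intro i _
      have h1 := (hω i).2
      have h2 := hw0 i
      nlinarith
  refine ⟨hmem, ?_⟩
  have hconv : ConvexOn ℝ (Set.Icc (3/4 : ℝ) ((2 + Real.sqrt 2)/4)) chshEntropyBound := by
    rw [chsh_eq_Gaux]; exact convexOn_Gaux
  have hcm : Finset.univ.centerMass w ω = ωstar := by
    rw [Finset.centerMass, hstar']
    simp only [smul_eq_mul, ← hWdef]
    rw [div_eq_inv_mul]
  have hjen := hconv.map_centerMass_le (fun i _ => hw0 i)
    (by rw [← hWdef]; exact hWpos) (fun i _ => hω i)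
  rw [hcm] at hjen
  rw [Finset.centerMass] at hjen
  simp only [smul_eq_mul, Function.comp, ← hWdef] at hjen
  have := mul_le_mul_of_nonneg_left hjen hWpos.le
  rw [← mul_assoc, mul_inv_cancel₀ (ne_of_gt hWpos), one_mul] at this
  calc (∑ i : Fin s, w i) * chshEntropyBound ωstar = W * chshEntropyBound ωstar := by
        rw [hWdef]
    _ ≤ ∑ i : Fin s, w i * chshEntropyBound (ω i) := this
end
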